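/- Fix K ≥ 1, rewards 0 ≤ r_1 < r_2 < ... < r_K, capacities c_1^M, ..., c_K^M > 0 with total C^M = Σ_k c_k^M, N ≥ 1, and prices p_1, ..., p_N ≥ 0. Let μ be a probability measure on [0,1]^N. Then the expected cost function c ↦ ∫_{[0,1]^N} cost(ε, c) dμ(ε) is well defined (the integrand is integrable for each c ∈ F_c) and is convex on F_c := {c ∈ ℝ^N : c_i ≥ 0 for all i, Σ_i c_i ≤ C^M}. -/

import Mathlib

open MeasureTheory

open scoped Classical in
/-- The critical type `k_c(ε, c)`: the least machine type `q` such that the total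
deployed capacity `∑ i, ε i * c i` is covered by types `1, …, q`. -/
noncomputable def kcrit {K N : ℕ} (hK : 0 < K) (cM : Fin K → ℝ)
    (ε c : Fin N → ℝ) : Fin K :=
  let S := (Finset.univ : Finset (Fin K)).filter fun q =>
      (∑ i, ε i * c i) ≤ ∑ k ∈ Finset.univ.filter (fun k => k ≤ q), cM k
  if h : S.Nonempty then S.min' h else ⟨0, hK⟩

/-- The cost of committing profile `c` under deployment rates `ε`:
`∑_{k < k_c} (r k - r k_c) * cM k + ∑ i, c i * (r k_c * ε i - p i)`. -/
noncomputable def acost {K N : ℕ} (hK : 0 < K) (r cM : Fin K → ℝ)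
    (p ε c : Fin N → ℝ) : ℝ :=
  (∑ k ∈ Finset.univ.filter (fun k => k < kcrit hK cM ε c),
      (r k - r (kcrit hK cM ε c)) * cM k)
    + ∑ i, c i * (r (kcrit hK cM ε c) * ε i - p i)

/-- The feasible region `F_c = {c : c i ≥ 0, ∑ i, c i ≤ C^M}`. -/
def feasSet (N : ℕ) (CM : ℝ) : Set (Fin N → ℝ) :=
  {c : Fin N → ℝ | (∀ i, 0 ≤ c i) ∧ ∑ i, c i ≤ CM}

section Aux
open Finset

/-- Linear coefficient part of the cost at type `q`. -/
noncomputable def Afun {K : ℕ} (r cM : Fin K → ℝ) (q : Fin K) : ℝ :=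
  ∑ k ∈ Finset.Iio q, (r k - r q) * cM k

lemma filter_lt_eq_Iio {K : ℕ} (q : Fin K) :
    Finset.univ.filter (fun k => k < q) = Finset.Iio q := by ext k; simp

lemma filter_le_eq_Iic {K : ℕ} (q : Fin K) [DecidablePred (fun k : Fin K => k ≤ q)] :
    Finset.univ.filter (fun k => k ≤ q) = Finset.Iic q := by ext k; simp

lemma sum_Iio_split {K : ℕ} (q q' : Fin K) (h : q ≤ q') (f : Fin K → ℝ) :
    ∑ k ∈ Iio q', f k = ∑ k ∈ Iio q, f k + ∑ k ∈ Ico q q', f k := by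
  rw [← Finset.sum_union]
  · congr 1
    ext k; simp only [Finset.mem_union, Finset.mem_Iio, Finset.mem_Ico]
    constructor
    · intro hk; by_cases h2 : k < q; · exact Or.inl h2
      exact Or.inr ⟨le_of_not_gt h2, hk⟩
    · rintro (h1|⟨h1,h2⟩); · exact lt_of_lt_of_le h1 h
      exact h2
  · simp only [Finset.disjoint_left, Finset.mem_Iio, Finset.mem_Ico]
    intro k hk ⟨h1,_⟩; exact absurd hk (not_lt.mpr h1)

lemma sum_Iic_eq {K : ℕ} (q : Fin K) (f : Fin K → ℝ) :
    ∑ k ∈ Iic q, f k = ∑ k ∈ Iio q, f k + f q := by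
  rw [← Finset.Iio_insert, Finset.sum_insert (by simp)]; ring

/-- Key inequality: the affine function at the critical type dominates. -/
lemma Hfun_le {K : ℕ} (r cM : Fin K → ℝ) (hr : StrictMono r) (hcM : ∀ k, 0 < cM k)
    (D : ℝ) (qs q : Fin K)
    (hub : D ≤ ∑ k ∈ Iic qs, cM k) (hlb : ∑ k ∈ Iio qs, cM k ≤ D) :
    Afun r cM q + r q * D ≤ Afun r cM qs + r qs * D := by
  rcases lt_trichotomy q qs with hlt | heq | hgt
  · -- q < qs
    have hA : Afun r cM qs + r qs * D - (Afun r cM q + r q * D)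
        = ∑ k ∈ Ico q qs, (r k - r qs) * cM k
          + (r qs - r q) * (D - ∑ k ∈ Iio q, cM k) := by
      unfold Afun
      rw [sum_Iio_split q qs hlt.le (fun k => (r k - r qs) * cM k)]
      have : ∑ k ∈ Iio q, (r k - r qs) * cM k - ∑ k ∈ Iio q, (r k - r q) * cM k
          = (r q - r qs) * ∑ k ∈ Iio q, cM k := by
        rw [← Finset.sum_sub_distrib, Finset.mul_sum]
        exact Finset.sum_congr rfl fun k _ => by ring
      linarith [this]
    have hsplit := sum_Iio_split q qs hlt.le cM
    have hrq : r q ≤ r qs := (hr hlt).le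
    have h2 : (r qs - r q) * ∑ k ∈ Ico q qs, cM k
        ≤ (r qs - r q) * (D - ∑ k ∈ Iio q, cM k) := by
      apply mul_le_mul_of_nonneg_left _ (by linarith)
      linarith
    have h3 : ∑ k ∈ Ico q qs, (r k - r qs) * cM k
          + (r qs - r q) * ∑ k ∈ Ico q qs, cM k
        = ∑ k ∈ Ico q qs, (r k - r q) * cM k := by
      rw [Finset.mul_sum, ← Finset.sum_add_distrib]
      exact Finset.sum_congr rfl fun k _ => by ring
    have h4 : 0 ≤ ∑ k ∈ Ico q qs, (r k - r q) * cM k :=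
      Finset.sum_nonneg fun k hk =>
        mul_nonneg (sub_nonneg.mpr (hr.monotone (Finset.mem_Ico.mp hk).1)) (hcM k).le
    linarith
  · rw [heq]
  · -- qs < q
    have hA : Afun r cM q + r q * D - (Afun r cM qs + r qs * D)
        = ∑ k ∈ Ico qs q, (r k - r q) * cM k
          + (r q - r qs) * (D - ∑ k ∈ Iio qs, cM k) := by
      unfold Afun
      rw [sum_Iio_split qs q hgt.le (fun k => (r k - r q) * cM k)]
      have : ∑ k ∈ Iio qs, (r k - r q) * cM k - ∑ k ∈ Iio qs, (r k - r qs) * cM k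
          = (r qs - r q) * ∑ k ∈ Iio qs, cM k := by
        rw [← Finset.sum_sub_distrib, Finset.mul_sum]
        exact Finset.sum_congr rfl fun k _ => by ring
      linarith [this]
    have hqs_mem : qs ∈ Ico qs q := Finset.mem_Ico.mpr ⟨le_refl _, hgt⟩
    have herase := Finset.sum_erase_add (Ico qs q) (fun k => (r k - r q) * cM k) hqs_mem
    have h2 : ∑ k ∈ (Ico qs q).erase qs, (r k - r q) * cM k ≤ 0 :=
      Finset.sum_nonpos fun k hk => by
        have hk2 := Finset.mem_Ico.mp (Finset.mem_of_mem_erase hk)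
        exact mul_nonpos_of_nonpos_of_nonneg
          (sub_nonpos.mpr (hr.monotone hk2.2.le)) (hcM k).le
    have hrq : r qs ≤ r q := (hr hgt).le
    have hIic := sum_Iic_eq qs cM
    have hring : (r qs - r q) * cM qs + (r q - r qs) * cM qs = 0 := by ring
    have h3 : (r q - r qs) * (D - ∑ k ∈ Iio qs, cM k) ≤ (r q - r qs) * cM qs := by
      apply mul_le_mul_of_nonneg_left _ (by linarith)
      linarith
    linarith

lemma kcrit_spec {K N : ℕ} (hK : 0 < K) (cM : Fin K → ℝ) (hcM : ∀ k, 0 < cM k)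
    (ε c : Fin N → ℝ) (hD : (∑ i, ε i * c i) ≤ ∑ k, cM k)
    (hD0 : 0 ≤ ∑ i, ε i * c i) :
    (∑ i, ε i * c i) ≤ ∑ k ∈ Iic (kcrit hK cM ε c), cM k ∧
    ∑ k ∈ Iio (kcrit hK cM ε c), cM k ≤ ∑ i, ε i * c i := by
  classical
  unfold kcrit
  simp only
  split_ifs with h
  case neg =>
    exfalso
    apply h
    refine ⟨⟨K-1, by omega⟩, ?_⟩
    simp only [Finset.mem_filter, Finset.mem_univ, true_and]
    have huniv : (Finset.univ.filter (fun k : Fin K => k ≤ (⟨K-1, by omega⟩ : Fin K)))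
        = Finset.univ := by
      ext k
      simp only [Finset.mem_filter, Finset.mem_univ, true_and, iff_true]
      rw [Fin.le_def]
      show (k:ℕ) ≤ K - 1
      omega
    rw [huniv]; exact hD
  case pos =>
    set S := (Finset.univ : Finset (Fin K)).filter fun q =>
      (∑ i, ε i * c i) ≤ ∑ k ∈ Finset.univ.filter (fun k => k ≤ q), cM k with hS
    set qs := S.min' h with hqs
    have hmem : qs ∈ S := S.min'_mem h
    rw [hS, Finset.mem_filter] at hmem
    constructor
    · rw [← filter_le_eq_Iic]
      exact hmem.2
    · by_cases h0 : (qs : ℕ) = 0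
      · have : Iio qs = ∅ := by
          ext k; simp only [Finset.mem_Iio, Finset.notMem_empty, iff_false, not_lt]
          exact Fin.le_def.mpr (by omega)
        rw [this]; simpa using hD0
      · set q' : Fin K := ⟨(qs : ℕ) - 1, by omega⟩ with hq'
        have hlt : q' < qs := Fin.lt_def.mpr (by simp [hq']; omega)
        have hnot : q' ∉ S := fun hmem' => absurd (S.min'_le q' hmem') (not_le.mpr hlt)
        rw [hS, Finset.mem_filter] at hnot
        push_neg at hnot
        have hgt := hnot (Finset.mem_univ q')
        have heq : Finset.univ.filter (fun k : Fin K => k ≤ q') = Iio qs := by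
          ext k
          simp only [Finset.mem_filter, Finset.mem_univ, true_and, Finset.mem_Iio,
            Fin.le_def, Fin.lt_def]
          simp [hq']; omega
        rw [heq] at hgt
        exact hgt.le

lemma acost_eq {K N : ℕ} (hK : 0 < K) (r cM : Fin K → ℝ) (p ε c : Fin N → ℝ) :
    acost hK r cM p ε c
      = Afun r cM (kcrit hK cM ε c) + r (kcrit hK cM ε c) * (∑ i, ε i * c i)
        - ∑ i, c i * p i := by
  classical
  unfold acost Afun
  rw [filter_lt_eq_Iio]
  have h2 : ∑ i, c i * (r (kcrit hK cM ε c) * ε i - p i)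
      = r (kcrit hK cM ε c) * (∑ i, ε i * c i) - ∑ i, c i * p i := by
    rw [Finset.mul_sum, ← Finset.sum_sub_distrib]
    exact Finset.sum_congr rfl fun i _ => by ring
  rw [h2]; ring

/-- The max of the affine-in-`c` functions over types. -/
noncomputable def supAff {K N : ℕ} (hK : 0 < K) (r cM : Fin K → ℝ) (ε c : Fin N → ℝ) : ℝ :=
  Finset.univ.sup' ⟨⟨0, hK⟩, Finset.mem_univ _⟩
    fun q => Afun r cM q + r q * (∑ i, ε i * c i)

/-- On the box and the feasible set, `acost` is a finite max of affine functions of `c`. -/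
lemma acost_eq_sup {K N : ℕ} (hK : 0 < K) (r cM : Fin K → ℝ)
    (hr : StrictMono r) (hcM : ∀ k, 0 < cM k) (p ε c : Fin N → ℝ)
    (hε : ∀ i, ε i ∈ Set.Icc (0:ℝ) 1) (hc : ∀ i, 0 ≤ c i)
    (hsum : ∑ i, c i ≤ ∑ k, cM k) :
    acost hK r cM p ε c = supAff hK r cM ε c - ∑ i, c i * p i := by
  have hD0 : 0 ≤ ∑ i, ε i * c i :=
    Finset.sum_nonneg fun i _ => mul_nonneg (hε i).1 (hc i)
  have hD : ∑ i, ε i * c i ≤ ∑ k, cM k := by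
    refine le_trans (Finset.sum_le_sum fun i _ => ?_) hsum
    calc ε i * c i ≤ 1 * c i := mul_le_mul_of_nonneg_right (hε i).2 (hc i)
      _ = c i := one_mul _
  obtain ⟨hub, hlb⟩ := kcrit_spec hK cM hcM ε c hD hD0
  rw [acost_eq]
  unfold supAff
  congr 1
  apply le_antisymm
  · exact Finset.le_sup' (fun q => Afun r cM q + r q * (∑ i, ε i * c i))
      (Finset.mem_univ (kcrit hK cM ε c))
  · exact Finset.sup'_le _ _ fun q _ => Hfun_le r cM hr hcM _ _ q hub hlb

end Aux

/-- If the deployment-rate vector `ε` is random with probability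
distribution `μ` on `[0,1]^N`, then the expected cost
`c ↦ ∫ ε, cost(ε, c) ∂μ` is well defined (the integrand is integrable for each
feasible `c`) and convex on the feasible region. -/
theorem expected_acost_convexOn
    (K N : ℕ) (hK : 0 < K) (hN : 0 < N)
    (r cM : Fin K → ℝ) (hr0 : 0 ≤ r ⟨0, hK⟩) (hr : StrictMono r)
    (hcM : ∀ k, 0 < cM k)
    (p : Fin N → ℝ) (hp : ∀ i, 0 ≤ p i)
    (μ : Measure (Fin N → ℝ)) [IsProbabilityMeasure μ]
    (hμ : μ {ε : Fin N → ℝ | ∀ i, ε i ∈ Set.Icc (0:ℝ) 1} = 1) :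
    (∀ c ∈ feasSet N (∑ k, cM k),
        Integrable (fun ε => acost hK r cM p ε c) μ) ∧
    ConvexOn ℝ (feasSet N (∑ k, cM k))
      (fun c => ∫ ε, acost hK r cM p ε c ∂μ) := by
  classical
  set CM := ∑ k, cM k with hCM
  have hCM0 : 0 ≤ CM := Finset.sum_nonneg fun k _ => (hcM k).le
  set box : Set (Fin N → ℝ) := {ε | ∀ i, ε i ∈ Set.Icc (0:ℝ) 1} with hbox
  have hbox_meas : MeasurableSet box := by
    have : box = ⋂ i, (fun ε : Fin N → ℝ => ε i) ⁻¹' (Set.Icc 0 1) := by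
      ext ε; simp [hbox, Set.mem_iInter]
    rw [this]
    exact MeasurableSet.iInter fun i => (measurable_pi_apply i) measurableSet_Icc
  have hcompl : μ boxᶜ = 0 := by
    rw [measure_compl hbox_meas (measure_ne_top μ box), hμ, measure_univ]
    simp
  have hae : ∀ᵐ ε ∂μ, ε ∈ box := by
    rw [MeasureTheory.ae_iff]
    simpa [Set.compl_def] using hcompl
  -- the modified function
  set Fb : (Fin N → ℝ) → (Fin N → ℝ) → ℝ :=
    fun c ε => if ε ∈ box then supAff hK r cM ε c - ∑ i, c i * p i else 0 with hFb
  have hcongr : ∀ c ∈ feasSet N CM, (fun ε => acost hK r cM p ε c) =ᵐ[μ] Fb c := by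
    intro c hc
    filter_upwards [hae] with ε hε
    simp only [hFb, if_pos hε]
    exact acost_eq_sup hK r cM hr hcM p ε c hε hc.1 hc.2
  -- measurability of Fb c
  have hmeasFb : ∀ c, Measurable (Fb c) := by
    intro c
    simp only [hFb]
    refine Measurable.ite hbox_meas (Measurable.sub ?_ measurable_const) measurable_const
    unfold supAff
    have hsum : Measurable fun ε : Fin N → ℝ => ∑ i, ε i * c i :=
      Finset.measurable_sum _ fun i _ => by fun_prop
    have hms := Finset.measurable_sup' (s := (Finset.univ : Finset (Fin K)))
      (f := fun (q : Fin K) (ε : Fin N → ℝ) => Afun r cM q + r q * ∑ i, ε i * c i)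
      ⟨⟨0, hK⟩, Finset.mem_univ _⟩
      (fun q _ => measurable_const.add (measurable_const.mul hsum))
    have hfe : (fun ε : Fin N → ℝ => Finset.univ.sup' ⟨⟨0, hK⟩, Finset.mem_univ _⟩
          fun q => Afun r cM q + r q * ∑ i, ε i * c i)
        = Finset.univ.sup' ⟨⟨0, hK⟩, Finset.mem_univ _⟩
          (fun (q : Fin K) (ε : Fin N → ℝ) => Afun r cM q + r q * ∑ i, ε i * c i) := by
      funext ε; exact (Finset.sup'_apply (s := (Finset.univ : Finset (Fin K))) _
        (fun (q : Fin K) (ε : Fin N → ℝ) => Afun r cM q + r q * ∑ i, ε i * c i) ε).symm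
    rw [hfe]; exact hms
  -- uniform bound
  set B : ℝ := Finset.univ.sup' ⟨⟨0, hK⟩, Finset.mem_univ _⟩
      (fun q : Fin K => |Afun r cM q| + |r q| * CM) with hBdef
  have hB0 : ∀ q : Fin K, |Afun r cM q| + |r q| * CM ≤ B := fun q =>
    Finset.le_sup' (fun q : Fin K => |Afun r cM q| + |r q| * CM) (Finset.mem_univ q)
  have hBnonneg : 0 ≤ B :=
    le_trans (add_nonneg (abs_nonneg _) (mul_nonneg (abs_nonneg _) hCM0)) (hB0 ⟨0, hK⟩)
  have hDbounds : ∀ c ∈ feasSet N CM, ∀ ε ∈ box,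
      0 ≤ (∑ i, ε i * c i) ∧ (∑ i, ε i * c i) ≤ CM := by
    intro c hc ε hε
    constructor
    · exact Finset.sum_nonneg fun i _ => mul_nonneg (hε i).1 (hc.1 i)
    · refine le_trans (le_trans (Finset.sum_le_sum fun i _ => ?_) hc.2) le_rfl
      calc ε i * c i ≤ 1 * c i := mul_le_mul_of_nonneg_right (hε i).2 (hc.1 i)
        _ = c i := one_mul _
  have habs : ∀ c ∈ feasSet N CM, ∀ ε ∈ box, |supAff hK r cM ε c| ≤ B := by
    intro c hc ε hε
    obtain ⟨hD0, hD⟩ := hDbounds c hc ε hε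
    have key : ∀ q : Fin K, |Afun r cM q + r q * (∑ i, ε i * c i)| ≤ B := by
      intro q
      calc |Afun r cM q + r q * (∑ i, ε i * c i)|
          ≤ |Afun r cM q| + |r q * (∑ i, ε i * c i)| := abs_add_le _ _
        _ ≤ |Afun r cM q| + |r q| * CM := by
            rw [abs_mul]
            have : |∑ i, ε i * c i| ≤ CM := by rw [abs_of_nonneg hD0]; exact hD
            have := mul_le_mul_of_nonneg_left this (abs_nonneg (r q))
            linarith
        _ ≤ B := hB0 q
    rw [abs_le]
    constructor
    · refine le_trans ?_ (Finset.le_sup'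
        (fun q => Afun r cM q + r q * (∑ i, ε i * c i)) (Finset.mem_univ ⟨0, hK⟩))
      have := key ⟨0, hK⟩
      have := abs_le.mp this
      linarith [this.1]
    · exact Finset.sup'_le _ _ fun q _ => le_trans (le_abs_self _) (key q)
  have hFbInt : ∀ c ∈ feasSet N CM, Integrable (Fb c) μ := by
    intro c hc
    refine Integrable.mono' (integrable_const (B + |∑ i, c i * p i|))
      (hmeasFb c).aestronglyMeasurable (Filter.Eventually.of_forall fun ε => ?_)
    simp only [hFb, Real.norm_eq_abs]
    split_ifs with h
    · calc |supAff hK r cM ε c - ∑ i, c i * p i|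
          ≤ |supAff hK r cM ε c| + |∑ i, c i * p i| := abs_sub _ _
        _ ≤ B + |∑ i, c i * p i| := by linarith [habs c hc ε h]
    · simp only [abs_zero]
      positivity
  have hInt : ∀ c ∈ feasSet N CM, Integrable (fun ε => acost hK r cM p ε c) μ :=
    fun c hc => (hFbInt c hc).congr (hcongr c hc).symm
  refine ⟨hInt, ?_⟩
  -- convexity of the feasible set
  have hconv : Convex ℝ (feasSet N CM) := by
    intro x hx y hy a b ha hb hab
    refine ⟨fun i => add_nonneg (mul_nonneg ha (hx.1 i)) (mul_nonneg hb (hy.1 i)), ?_⟩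
    simp only [Pi.add_apply, Pi.smul_apply, smul_eq_mul]
    rw [Finset.sum_add_distrib, ← Finset.mul_sum, ← Finset.mul_sum]
    calc a * ∑ i, x i + b * ∑ i, y i ≤ a * CM + b * CM :=
          add_le_add (mul_le_mul_of_nonneg_left hx.2 ha) (mul_le_mul_of_nonneg_left hy.2 hb)
      _ = CM := by rw [← add_mul, hab, one_mul]
  refine ⟨hconv, ?_⟩
  intro x hx y hy a b ha hb hab
  have hz : a • x + b • y ∈ feasSet N CM := hconv hx hy ha hb hab
  simp only [smul_eq_mul]
  rw [integral_congr_ae (hcongr _ hz), integral_congr_ae (hcongr _ hx),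
    integral_congr_ae (hcongr _ hy)]
  have hptwise : ∀ ε, Fb (a • x + b • y) ε ≤ a * Fb x ε + b * Fb y ε := by
    intro ε
    simp only [hFb]
    split_ifs with h
    · -- ε ∈ box
      have hDz : (∑ i, ε i * (a • x + b • y) i)
          = a * (∑ i, ε i * x i) + b * (∑ i, ε i * y i) := by
        simp only [Pi.add_apply, Pi.smul_apply, smul_eq_mul]
        rw [Finset.mul_sum, Finset.mul_sum, ← Finset.sum_add_distrib]
        exact Finset.sum_congr rfl fun i _ => by ring
      have hPz : (∑ i, (a • x + b • y) i * p i)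
          = a * (∑ i, x i * p i) + b * (∑ i, y i * p i) := by
        simp only [Pi.add_apply, Pi.smul_apply, smul_eq_mul]
        rw [Finset.mul_sum, Finset.mul_sum, ← Finset.sum_add_distrib]
        exact Finset.sum_congr rfl fun i _ => by ring
      have hsup : supAff hK r cM ε (a • x + b • y)
          ≤ a * supAff hK r cM ε x + b * supAff hK r cM ε y := by
        unfold supAff
        rw [hDz]
        refine Finset.sup'_le _ _ fun q _ => ?_
        have h1 : Afun r cM q + r q * (∑ i, ε i * x i)
            ≤ Finset.univ.sup' ⟨⟨0, hK⟩, Finset.mem_univ _⟩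
              (fun q => Afun r cM q + r q * (∑ i, ε i * x i)) :=
          Finset.le_sup' (fun q => Afun r cM q + r q * (∑ i, ε i * x i)) (Finset.mem_univ q)
        have h2 : Afun r cM q + r q * (∑ i, ε i * y i)
            ≤ Finset.univ.sup' ⟨⟨0, hK⟩, Finset.mem_univ _⟩
              (fun q => Afun r cM q + r q * (∑ i, ε i * y i)) :=
          Finset.le_sup' (fun q => Afun r cM q + r q * (∑ i, ε i * y i)) (Finset.mem_univ q)
        have heq : Afun r cM q + r q * (a * (∑ i, ε i * x i) + b * (∑ i, ε i * y i))
            = a * (Afun r cM q + r q * (∑ i, ε i * x i))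
              + b * (Afun r cM q + r q * (∑ i, ε i * y i)) := by
          rw [show b = 1 - a by linarith]; ring
        rw [heq]
        exact add_le_add (mul_le_mul_of_nonneg_left h1 ha) (mul_le_mul_of_nonneg_left h2 hb)
      rw [hPz]
      linarith
    · simp
  have hIntz := hFbInt _ hz
  have hIntx := hFbInt _ hx
  have hInty := hFbInt _ hy
  calc ∫ ε, Fb (a • x + b • y) ε ∂μ
      ≤ ∫ ε, (a * Fb x ε + b * Fb y ε) ∂μ :=
        integral_mono hIntz ((hIntx.const_mul a).add (hInty.const_mul b)) hptwise
    _ = a * ∫ ε, Fb x ε ∂μ + b * ∫ ε, Fb y ε ∂μ := by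
        rw [integral_add (hIntx.const_mul a) (hInty.const_mul b),
          integral_const_mul, integral_const_mul]
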